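/- For A ∈ R^{m×n} and b ∈ R^m, every local minimizer of the total least squares objective x ↦ ‖Ax − b‖²/(‖x‖² + 1) over R^n is a global minimizer. -/

import Mathlib

/-- The total least squares objective `‖Ax - b‖² / (‖x‖² + 1)`. -/
noncomputable def tlsObj {m n : ℕ} (A : Matrix (Fin m) (Fin n) ℝ) (b : Fin m → ℝ)
    (x : EuclideanSpace ℝ (Fin n)) : ℝ :=
  (∑ i, (∑ j, A i j * x j - b i) ^ 2) / (‖x‖ ^ 2 + 1)

/-- A quadratic `β t + α t²` nonnegative on a neighborhood of 0 satisfies `0 ≤ β + α`. -/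
lemma quad_aux {a b δ : ℝ} (hδ : 0 < δ) (h : ∀ t : ℝ, |t| < δ → 0 ≤ b * t + a * t ^ 2) :
    0 ≤ b + a := by
  have htm : 0 < min δ 1 := lt_min hδ one_pos
  set t : ℝ := min δ 1 / 2 with ht
  have ht0 : 0 < t := by positivity
  have htδ : t < δ := by
    have : min δ 1 ≤ δ := min_le_left _ _
    linarith
  have ht1 : t ≤ 1 / 2 := by
    have : min δ 1 ≤ 1 := min_le_right _ _
    linarith
  have h1 := h t (by rwa [abs_of_pos ht0])
  have h2 := h (-t) (by rwa [abs_neg, abs_of_pos ht0])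
  nlinarith [mul_pos ht0 ht0, sq_nonneg t]

theorem stmt8 {m n : ℕ} (A : Matrix (Fin m) (Fin n) ℝ) (b : Fin m → ℝ)
    (xs : EuclideanSpace ℝ (Fin n))
    (hloc : ∃ ε > 0, ∀ x : EuclideanSpace ℝ (Fin n), ‖x - xs‖ < ε →
      tlsObj A b xs ≤ tlsObj A b x) :
    ∀ x : EuclideanSpace ℝ (Fin n), tlsObj A b xs ≤ tlsObj A b x := by
  obtain ⟨ε, hε, hmin⟩ := hloc
  intro x
  set v : EuclideanSpace ℝ (Fin n) := x - xs with hv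
  have hx : x = xs + (1 : ℝ) • v := by simp [hv]
  set c := tlsObj A b xs with hc
  set r : Fin m → ℝ := fun i => (∑ j, A i j * xs j) - b i with hr
  set s : Fin m → ℝ := fun i => ∑ j, A i j * v j with hs
  set n0 : ℝ := ∑ i, r i ^ 2 with hn0
  set n1 : ℝ := 2 * ∑ i, r i * s i with hn1
  set n2 : ℝ := ∑ i, s i ^ 2 with hn2
  set d0 : ℝ := ‖xs‖ ^ 2 + 1 with hd0def
  set d1 : ℝ := 2 * (inner ℝ xs v : ℝ) with hd1def
  set d2 : ℝ := ‖v‖ ^ 2 with hd2def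
  have hD : ∀ t : ℝ, ‖xs + t • v‖ ^ 2 + 1 = d0 + d1 * t + d2 * t ^ 2 := by
    intro t
    rw [norm_add_sq_real, real_inner_smul_right, norm_smul]
    simp only [hd0def, hd1def, hd2def, mul_pow, sq_abs, Real.norm_eq_abs]
    ring
  have hDpos : ∀ t : ℝ, 0 < d0 + d1 * t + d2 * t ^ 2 := by
    intro t; rw [← hD]; positivity
  have hN : ∀ t : ℝ,
      (∑ i, (∑ j, A i j * (xs + t • v) j - b i) ^ 2) = n0 + n1 * t + n2 * t ^ 2 := by
    intro t
    have happ : ∀ i, (∑ j, A i j * (xs + t • v) j) - b i = r i + t * s i := by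
      intro i
      have hterm : ∀ j, A i j * (xs + t • v) j = A i j * xs j + t * (A i j * v j) := by
        intro j
        simp only [PiLp.add_apply, PiLp.smul_apply, smul_eq_mul]
        ring
      simp only [hterm, Finset.sum_add_distrib, ← Finset.mul_sum, hr, hs]
      ring
    calc (∑ i, (∑ j, A i j * (xs + t • v) j - b i) ^ 2)
        = ∑ i, (r i ^ 2 + (2 * (r i * s i)) * t + s i ^ 2 * t ^ 2) :=
          Finset.sum_congr rfl fun i _ => by rw [happ i]; ring
      _ = n0 + n1 * t + n2 * t ^ 2 := by
          rw [hn0, hn1, hn2]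
          simp only [Finset.sum_add_distrib, ← Finset.sum_mul, ← Finset.mul_sum]
  have hObj : ∀ t : ℝ, tlsObj A b (xs + t • v) =
      (n0 + n1 * t + n2 * t ^ 2) / (d0 + d1 * t + d2 * t ^ 2) := by
    intro t
    rw [tlsObj, hN t, hD t]
  have hc0 : c * d0 = n0 := by
    have : c = n0 / d0 := by rw [hc, tlsObj]
    rw [this, div_mul_cancel₀]
    exact ne_of_gt (by positivity)
  -- local minimality along the line
  set δ : ℝ := ε / (‖v‖ + 1) with hδdef
  have hδ : 0 < δ := by positivity
  have hkey : ∀ t : ℝ, |t| < δ →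
      0 ≤ (n1 - c * d1) * t + (n2 - c * d2) * t ^ 2 := by
    intro t htlt
    have hclose : ‖(xs + t • v) - xs‖ < ε := by
      have : ‖(xs + t • v) - xs‖ = |t| * ‖v‖ := by
        rw [add_sub_cancel_left, norm_smul, Real.norm_eq_abs]
      rw [this]
      have h1 : |t| * ‖v‖ ≤ |t| * (‖v‖ + 1) := by
        apply mul_le_mul_of_nonneg_left (by linarith) (abs_nonneg t)
      have h2 : |t| * (‖v‖ + 1) < ε := by
        rw [hδdef, lt_div_iff₀ (by positivity)] at htlt
        linarith
      linarith
    have hle := hmin _ hclose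
    rw [hObj t, le_div_iff₀ (hDpos t)] at hle
    nlinarith [hle, hc0]
  have hsum := quad_aux hδ hkey
  -- conclude at t = 1
  rw [hx, hObj 1, le_div_iff₀ (hDpos 1)]
  nlinarith [hc0, hsum]
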